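/- Let μ = {i_1 < i_2 < ... < i_g} be a set of distinct positive integers with sum M, and let L ≥ 2M. Define p_i = L - 2·Σ_{j∈μ} min(i,j) for i ∈ μ, and the g×g matrix A with entries A_{i,j} = δ_{i,j} p_i + 2 min(i,j) for i,j ∈ μ. Then A is positive definite. -/

import Mathlib

open Matrix Finset

/-- For `μ = {i_1 < … < i_g}` distinct positive integers with sum `M` and `L ≥ 2M`,
the matrix `A_{st} = δ_{st} p_{i_s} + 2 min(i_s, i_t)` with vacancy numbers
`p_i = L - 2 Σ_{j∈μ} min(i,j)` is positive definite. -/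
theorem stmt3 (g : ℕ) (i : Fin g → ℕ) (hmono : StrictMono i) (hpos : ∀ s, 0 < i s)
    (L : ℕ) (hL : 2 * ∑ s, i s ≤ L)
    (A : Matrix (Fin g) (Fin g) ℝ)
    (hA : ∀ s t, A s t =
      (if s = t then (L : ℝ) - 2 * ∑ u, (min (i s) (i u) : ℝ) else 0)
        + 2 * (min (i s) (i t) : ℝ)) :
    A.PosDef := by
  have hsym : A.IsHermitian := by
    ext s t
    simp only [conjTranspose_apply, star_trivial, hA]
    rcases eq_or_ne s t with rfl | h
    · rfl
    · simp [h, h.symm, min_comm]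
  set N := ∑ s, i s with hN
  have hiN : ∀ s, i s ≤ N := fun s =>
    Finset.single_le_sum (fun t _ => Nat.zero_le (i t)) (Finset.mem_univ s)
  have hmin : ∀ s t : Fin g, (min (i s) (i t) : ℝ) =
      ∑ k ∈ Finset.range N, (if k < i s then (1:ℝ) else 0) * (if k < i t then 1 else 0) := by
    intro s t
    have h1 : ∀ k, (if k < i s then (1:ℝ) else 0) * (if k < i t then 1 else 0)
        = if k < min (i s) (i t) then (1:ℝ) else 0 := by
      intro k
      by_cases h1 : k < i s <;> by_cases h2 : k < i t <;> simp [h1, h2] <;> omega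
    rw [Finset.sum_congr rfl fun k _ => h1 k, Finset.sum_boole]
    have h2 : (Finset.range N).filter (fun k => k < min (i s) (i t)) = Finset.range (min (i s) (i t)) := by
      ext k
      simp only [Finset.mem_filter, Finset.mem_range]
      have := hiN s
      omega
    rw [h2, Finset.card_range]
    simp [Nat.cast_min]
  refine posDef_iff_dotProduct_mulVec.mpr ⟨hsym, fun x hx => ?_⟩
  simp only [star_trivial]
  have hq : x ⬝ᵥ A *ᵥ x =
      (∑ s, x s ^ 2 * ((L : ℝ) - 2 * ∑ u, (min (i s) (i u) : ℝ)))
      + 2 * ∑ k ∈ Finset.range N, (∑ s, if k < i s then x s else 0) ^ 2 := by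
    simp only [dotProduct, mulVec, dotProduct]
    have expand : ∀ s, x s * ∑ t, A s t * x t =
        x s ^ 2 * ((L : ℝ) - 2 * ∑ u, (min (i s) (i u) : ℝ))
        + ∑ t, 2 * (x s * x t * (min (i s) (i t) : ℝ)) := by
      intro s
      rw [Finset.mul_sum]
      have h3 : ∀ t, x s * (A s t * x t) =
          (if s = t then x s ^ 2 * ((L : ℝ) - 2 * ∑ u, (min (i s) (i u) : ℝ)) else 0)
          + 2 * (x s * x t * (min (i s) (i t) : ℝ)) := by
        intro t
        rw [hA s t]
        rcases eq_or_ne s t with rfl | h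
        · simp; ring
        · simp [h]; ring
      rw [Finset.sum_congr rfl fun t _ => h3 t, Finset.sum_add_distrib,
        Finset.sum_ite_eq Finset.univ s (fun _ => x s ^ 2 * ((L : ℝ) - 2 * ∑ u, (min (i s) (i u) : ℝ)))]
      simp
    rw [Finset.sum_congr rfl fun s _ => expand s, Finset.sum_add_distrib]
    congr 1
    have pull2 : (∑ s, ∑ t, 2 * (x s * x t * (min (i s) (i t) : ℝ)))
        = 2 * ∑ s, ∑ t, x s * x t * (min (i s) (i t) : ℝ) := by
      rw [Finset.mul_sum]
      exact Finset.sum_congr rfl fun s _ => (Finset.mul_sum _ _ _).symm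
    rw [pull2]
    congr 1
    calc ∑ s, ∑ t, x s * x t * (min (i s) (i t) : ℝ)
        = ∑ s, ∑ t, ∑ k ∈ Finset.range N,
            (if k < i s then x s else 0) * (if k < i t then x t else 0) := by
          refine Finset.sum_congr rfl fun s _ => Finset.sum_congr rfl fun t _ => ?_
          rw [hmin s t, Finset.mul_sum]
          refine Finset.sum_congr rfl fun k _ => ?_
          by_cases h1 : k < i s <;> by_cases h2 : k < i t <;> simp [h1, h2] <;> ring
      _ = ∑ k ∈ Finset.range N, ∑ s, ∑ t,
            (if k < i s then x s else 0) * (if k < i t then x t else 0) := by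
          rw [Finset.sum_congr rfl fun s (_ : s ∈ Finset.univ) =>
            (Finset.sum_comm (s := Finset.univ) (t := Finset.range N)
              (f := fun t k => (if k < i s then x s else 0) * (if k < i t then x t else 0)))]
          exact Finset.sum_comm
      _ = ∑ k ∈ Finset.range N, (∑ s, if k < i s then x s else 0) ^ 2 := by
          refine Finset.sum_congr rfl fun k _ => ?_
          rw [sq, Finset.sum_mul_sum]
  rw [hq]
  -- nonnegativity of the diagonal part
  have hp : ∀ s : Fin g, 0 ≤ (L : ℝ) - 2 * ∑ u, (min (i s) (i u) : ℝ) := by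
    intro s
    have h1 : (∑ u, (min (i s) (i u) : ℝ)) ≤ ∑ u, (i u : ℝ) :=
      Finset.sum_le_sum fun u _ => by exact_mod_cast min_le_right (i s) (i u)
    have h2 : (2 * (N:ℝ) : ℝ) ≤ L := by exact_mod_cast hL
    have h3 : (↑N : ℝ) = ∑ u, (i u : ℝ) := by rw [hN]; push_cast; rfl
    nlinarith
  have hterm1 : 0 ≤ ∑ s, x s ^ 2 * ((L : ℝ) - 2 * ∑ u, (min (i s) (i u) : ℝ)) :=
    Finset.sum_nonneg fun s _ => mul_nonneg (sq_nonneg _) (hp s)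
  have hterm2 : 0 < ∑ k ∈ Finset.range N, (∑ s, if k < i s then x s else 0) ^ 2 := by
    -- find s with x s ≠ 0; show some f k ≠ 0
    by_contra hcon
    push_neg at hcon
    have hzero : ∑ k ∈ Finset.range N, (∑ s, if k < i s then x s else 0) ^ 2 = 0 :=
      le_antisymm hcon (Finset.sum_nonneg fun k _ => sq_nonneg _)
    have hfk : ∀ k ∈ Finset.range N, (∑ s, if k < i s then x s else 0) = 0 := by
      intro k hk
      have := (Finset.sum_eq_zero_iff_of_nonneg (fun k _ => sq_nonneg _)).mp hzero k hk
      exact pow_eq_zero_iff (two_ne_zero) |>.mp this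
    have hf : ∀ k, (∑ s, if k < i s then x s else 0) = 0 := by
      intro k
      by_cases hk : k < N
      · exact hfk k (Finset.mem_range.mpr hk)
      · refine Finset.sum_eq_zero fun t _ => ?_
        have : ¬ k < i t := by have := hiN t; omega
        simp [this]
    apply hx
    funext s
    have key : x s = (∑ t, if i s - 1 < i t then x t else 0)
        - (∑ t, if i s < i t then x t else 0) := by
      rw [← Finset.sum_sub_distrib]
      have h4 : ∀ t, (if i s - 1 < i t then x t else 0) - (if i s < i t then x t else 0)
          = if t = s then x t else 0 := by
        intro t
        rcases eq_or_ne t s with rfl | h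
        · have h5 : i t - 1 < i t := by have := hpos t; omega
          simp [h5]
        · have h6 : i t ≠ i s := fun hh => h (hmono.injective hh)
          by_cases h7 : i s < i t
          · have h8 : i s - 1 < i t := by omega
            simp [h7, h8, h]
          · have h8 : ¬ (i s - 1 < i t) := by have := hpos s; omega
            simp [h7, h8, h]
      rw [Finset.sum_congr rfl fun t _ => h4 t, Finset.sum_ite_eq' Finset.univ s]
      simp
    rw [key, hf (i s - 1), hf (i s)]
    simp
  linarith
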